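/- A finite word W is a rich palindrome if and only if P_W(n) + P_W(n+1) = C_W(n+1) - C_W(n) + 2 for each 0 ≤ n ≤ |W|. -/

import Mathlib

open List

variable {α : Type*} [DecidableEq α]

/-- The set of factors (contiguous subwords) of `W`. -/
def factorFinset (W : List α) : Finset (List α) := (W.inits.flatMap List.tails).toFinset

/-- A palindrome is a word equal to its reversal. -/
def Pal (u : List α) : Prop := u.reverse = u

instance : DecidablePred (Pal : List α → Prop) :=
  fun u => inferInstanceAs (Decidable (u.reverse = u))

/-- The set of palindromic factors of `W` (including the empty word). -/
def palFactorFinset (W : List α) : Finset (List α) := (factorFinset W).filter Pal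

/-- Subword complexity: the number of distinct factors of `W` of length `n`. -/
def C (W : List α) (n : ℕ) : ℕ := ((factorFinset W).filter (fun u => u.length = n)).card

/-- Palindromic complexity: number of distinct palindromic factors of `W` of length `n`. -/
def P (W : List α) (n : ℕ) : ℕ := ((palFactorFinset W).filter (fun u => u.length = n)).card

/-- A word is rich if it has exactly `|W| + 1` distinct palindromic factors. -/
def Rich (W : List α) : Prop := (palFactorFinset W).card = W.length + 1

/-- Number of occurrences of `u` as a factor of `W`. -/
def occ (u W : List α) : ℕ := ((List.range (W.length + 1)).filter (fun i => u <+: W.drop i)).length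

/-- `Z` is a complete return to `u` in `W`: a factor of `W` with exactly two
occurrences of `u`, one as a prefix and one as a suffix. -/
def CompleteReturn (u Z W : List α) : Prop := Z <:+: W ∧ u <+: Z ∧ u <:+ Z ∧ occ u Z = 2

/-- `u` is a right special factor of `W`. -/
def RightSpecial (u W : List α) : Prop :=
  ∃ x y : α, x ≠ y ∧ (u ++ [x]) <:+: W ∧ (u ++ [y]) <:+: W

/-- `R_W`: the smallest `p` such that `W` has no right special factor of length `p`. -/
noncomputable def RW (W : List α) : ℕ := sInf {p : ℕ | ∀ u : List α, u.length = p → ¬ RightSpecial u W}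

/-- `K_W`: the length of the shortest suffix of `W` occurring exactly once in `W`. -/
noncomputable def KW (W : List α) : ℕ := sInf {k : ℕ | ∃ u : List α, u <:+ W ∧ u.length = k ∧ occ u W = 1}

/-- A word is trapezoidal if `|W| = R_W + K_W`. -/
def Trapezoidal (W : List α) : Prop := W.length = RW W + KW W

/-- The minimal period of `W`. -/
noncomputable def minPeriod (W : List α) : ℕ :=
  sInf {q : ℕ | 0 < q ∧ ∀ i : ℕ, i + q < W.length → W[i]? = W[i + q]?}

/-- A binary word is balanced if the number of occurrences of a letter in two
factors of equal length differ by at most 1. -/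
def BalancedWord (W : List Bool) : Prop :=
  ∀ u v : List Bool, u <:+: W → v <:+: W → u.length = v.length →
    u.count true ≤ v.count true + 1


section Aux
open Finset


lemma filter_card_subset_le {β : Type*} [DecidableEq β] (p : β → Prop) [DecidablePred p]
    {B E : Finset β} (h : B ⊆ E) :
    (E.filter p).card + B.card ≤ (B.filter p).card + E.card := by
  have h1 : E.filter p ⊆ (B.filter p) ∪ (E \ B) := by
    intro x hx
    simp only [Finset.mem_filter, Finset.mem_union, Finset.mem_sdiff] at *
    by_cases hb : x ∈ B
    · exact Or.inl ⟨hb, hx.2⟩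
    · exact Or.inr ⟨hx.1, hb⟩
  have h2 := Finset.card_le_card h1
  have h3 := Finset.card_union_le (B.filter p) (E \ B)
  have h4 : (E \ B).card = E.card - B.card := Finset.card_sdiff_of_subset h
  have h5 := Finset.card_le_card h
  omega

lemma walk_lemma {S T : Type*} [DecidableEq S] [DecidableEq T]
    (σS : S → S) (σT : T → T) :
    ∀ (m : ℕ) (v : ℕ → S) (e : ℕ → T),
    (∀ i j, i < m → j < m → e i = e j → v i = v j ∧ v (i+1) = v (j+1)) →
    (∀ i, i ≤ m → σS (v i) = v (m - i)) →
    (∀ i, i < m → σT (e i) = e (m - 1 - i)) →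
    (((Finset.range (m+1)).image v).filter (fun x => σS x = x)).card
      + (((Finset.range m).image e).filter (fun x => σT x = x)).card
      + ((Finset.range (m+1)).image v).card
      ≤ ((Finset.range m).image e).card + 2 := by
  intro m
  induction m using Nat.strong_induction_on with
  | _ m IH =>
    match m with
    | 0 =>
      intro v e he hv hE
      simp only [Finset.range_zero, Finset.image_empty, Finset.filter_empty, Finset.card_empty]
      have h1 : (Finset.range 1).image v = {v 0} := by simp
      rw [h1]
      have := Finset.card_filter_le ({v 0} : Finset S) (fun x => σS x = x)
      simp at this ⊢
      omega
    | 1 =>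
      intro v e he hv hE
      have hV : (Finset.range 2).image v = {v 0, v 1} := by
        ext x; simp only [Finset.mem_image, Finset.mem_range, Finset.mem_insert,
          Finset.mem_singleton]
        constructor
        · rintro ⟨i, hi, rfl⟩; interval_cases i <;> simp
        · rintro (rfl | rfl); exacts [⟨0, by omega, rfl⟩, ⟨1, by omega, rfl⟩]
      have hE1 : (Finset.range 1).image e = {e 0} := by simp
      rw [hV, hE1]
      by_cases h01 : v 0 = v 1
      · have hs : ({v 0, v 1} : Finset S) = {v 0} := by rw [h01]; simp
        rw [hs]
        have h2 := Finset.card_filter_le ({v 0} : Finset S) (fun x => σS x = x)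
        have h3 := Finset.card_filter_le ({e 0} : Finset T) (fun x => σT x = x)
        simp only [Finset.card_singleton] at *
        omega
      · have hv0 : σS (v 0) = v 1 := by have := hv 0 (by omega); simpa using this
        have hv1 : σS (v 1) = v 0 := by have := hv 1 (by omega); simpa using this
        have hfV : ({v 0, v 1} : Finset S).filter (fun x => σS x = x) = ∅ := by
          ext x
          simp only [Finset.mem_filter, Finset.mem_insert, Finset.mem_singleton,
            Finset.notMem_empty, iff_false, not_and]
          rintro (rfl | rfl) hfix
          · rw [hv0] at hfix; exact h01 hfix.symm
          · rw [hv1] at hfix; exact h01 hfix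
        rw [hfV]
        have h2 : ({v 0, v 1} : Finset S).card = 2 := by
          rw [Finset.card_insert_of_notMem (by simpa using h01)]; simp
        have h3 := Finset.card_filter_le ({e 0} : Finset T) (fun x => σT x = x)
        simp only [Finset.card_singleton, Finset.card_empty] at *
        omega
    | (k+2) =>
      intro v e he hv hE
      set v' : ℕ → S := fun i => v (i+1) with hv'
      set e' : ℕ → T := fun i => e (i+1) with he'
      set A := (Finset.range (k+1)).image v' with hA
      set B := (Finset.range k).image e' with hB
      have IH' := IH k (by omega) v' e'
        (by intro i j hi hj hee
            have := he (i+1) (j+1) (by omega) (by omega) hee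
            exact ⟨this.1, this.2⟩)
        (by intro i hi
            have h1 := hv (i+1) (by omega)
            simp only [hv']
            rw [h1]; congr 1; omega)
        (by intro i hi
            have h1 := hE (i+1) (by omega)
            simp only [he']
            rw [h1]; congr 1; omega)
      rw [← hA, ← hB] at IH'
      have hVset : (Finset.range (k+2+1)).image v = insert (v 0) (insert (v (k+2)) A) := by
        ext x
        simp only [Finset.mem_image, Finset.mem_range, Finset.mem_insert, hA, hv']
        constructor
        · rintro ⟨i, hi, rfl⟩
          rcases Nat.eq_zero_or_pos i with rfl | hpos
          · exact Or.inl rfl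
          · rcases eq_or_ne i (k+2) with rfl | hne
            · exact Or.inr (Or.inl rfl)
            · exact Or.inr (Or.inr ⟨i - 1, by omega, by congr 1; omega⟩)
        · rintro (rfl | rfl | ⟨i, hi, rfl⟩)
          exacts [⟨0, by omega, rfl⟩, ⟨k+2, by omega, rfl⟩, ⟨i+1, by omega, rfl⟩]
      have hEset : (Finset.range (k+2)).image e = insert (e 0) (insert (e (k+1)) B) := by
        ext x
        simp only [Finset.mem_image, Finset.mem_range, Finset.mem_insert, hB, he']
        constructor
        · rintro ⟨i, hi, rfl⟩
          rcases Nat.eq_zero_or_pos i with rfl | hpos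
          · exact Or.inl rfl
          · rcases eq_or_ne i (k+1) with rfl | hne
            · exact Or.inr (Or.inl rfl)
            · exact Or.inr (Or.inr ⟨i - 1, by omega, by congr 1; omega⟩)
        · rintro (rfl | rfl | ⟨i, hi, rfl⟩)
          exacts [⟨0, by omega, rfl⟩, ⟨k+1, by omega, rfl⟩, ⟨i+1, by omega, rfl⟩]
      rw [hVset, hEset]
      have hB_sub : B ⊆ insert (e 0) (insert (e (k+1)) B) := by
        intro x hx; simp [hx]
      by_cases h0 : v 0 ∈ A
      · -- Case 1
        have hm0 : v (k+2) ∈ A := by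
          simp only [hA, hv', Finset.mem_image, Finset.mem_range] at h0 ⊢
          obtain ⟨j, hj, hjv⟩ := h0
          refine ⟨k - j, by omega, ?_⟩
          have h1 := hv 0 (by omega)
          have h2 := hv (j+1) (by omega)
          simp only [Nat.sub_zero] at h1
          rw [← h1, ← hjv, h2]
          congr 1; omega
        have hVeq : insert (v 0) (insert (v (k+2)) A) = A := by
          rw [Finset.insert_eq_self.mpr, Finset.insert_eq_self.mpr] <;> simp [h0, hm0]
        rw [hVeq]
        have := filter_card_subset_le (fun x => σT x = x) hB_sub
        omega
      · -- Case 2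
        have hm0 : v (k+2) ∉ A := by
          intro h
          apply h0
          simp only [hA, hv', Finset.mem_image, Finset.mem_range] at h ⊢
          obtain ⟨j, hj, hjv⟩ := h
          refine ⟨k - j, by omega, ?_⟩
          have h1 := hv (k+2) (by omega)
          have h2 := hv (j+1) (by omega)
          simp only [Nat.sub_self] at h1
          rw [← h1, ← hjv, h2]
          congr 1; omega
        have hvk1A : v (k+1) ∈ A := by
          simp only [hA, hv', Finset.mem_image, Finset.mem_range]
          exact ⟨k, by omega, rfl⟩
        have he0B : e 0 ∉ B := by
          intro h
          simp only [hB, he', Finset.mem_image, Finset.mem_range] at h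
          obtain ⟨j, hj, hje⟩ := h
          have h1 := he (j+1) 0 (by omega) (by omega) hje
          apply h0
          simp only [hA, hv', Finset.mem_image, Finset.mem_range]
          exact ⟨j, by omega, h1.1⟩
        have hene : e 0 ≠ e (k+1) := by
          intro h
          have h1 := he 0 (k+1) (by omega) (by omega) h
          apply h0
          rw [h1.1]
          exact hvk1A
        have hekB : e (k+1) ∉ B := by
          intro h
          simp only [hB, he', Finset.mem_image, Finset.mem_range] at h
          obtain ⟨j, hj, hje⟩ := h
          have h1 := he (j+1) (k+1) (by omega) (by omega) hje
          apply hm0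
          rw [← h1.2]
          simp only [hA, hv', Finset.mem_image, Finset.mem_range]
          exact ⟨j + 1, by omega, rfl⟩
        have he0nfix : ¬ (σT (e 0) = e 0) := by
          have h1 := hE 0 (by omega)
          have h2 : k + 2 - 1 - 0 = k + 1 := by omega
          rw [h2] at h1
          rw [h1]
          exact fun h => hene h.symm
        have heknfix : ¬ (σT (e (k+1)) = e (k+1)) := by
          have h1 := hE (k+1) (by omega)
          have h2 : k + 2 - 1 - (k+1) = 0 := by omega
          rw [h2] at h1
          rw [h1]
          exact fun h => hene h
        have hEcard : (insert (e 0) (insert (e (k+1)) B)).card = B.card + 2 := by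
          rw [Finset.card_insert_of_notMem (by
              simp only [Finset.mem_insert]; push_neg; exact ⟨hene, he0B⟩),
            Finset.card_insert_of_notMem hekB]
        have hEfilter : ((insert (e 0) (insert (e (k+1)) B)).filter (fun x => σT x = x))
            = B.filter (fun x => σT x = x) := by
          rw [Finset.filter_insert, if_neg he0nfix, Finset.filter_insert, if_neg heknfix]
        rw [hEcard, hEfilter]
        by_cases hveq : v 0 = v (k+2)
        · -- 2a
          have hVeq : insert (v 0) (insert (v (k+2)) A) = insert (v 0) A := by
            rw [← hveq, Finset.insert_idem]
          rw [hVeq]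
          have hc : (insert (v 0) A).card = A.card + 1 :=
            Finset.card_insert_of_notMem h0
          have hf : ((insert (v 0) A).filter (fun x => σS x = x)).card
              ≤ (A.filter (fun x => σS x = x)).card + 1 := by
            rw [Finset.filter_insert]
            split
            · exact (Finset.card_insert_le _ _)
            · omega
          omega
        · -- 2b
          have hv0nfix : ¬ (σS (v 0) = v 0) := by
            have h1 := hv 0 (by omega)
            simp only [Nat.sub_zero] at h1
            rw [h1]; exact fun h => hveq h.symm
          have hvmnfix : ¬ (σS (v (k+2)) = v (k+2)) := by
            have h1 := hv (k+2) (by omega)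
            simp only [Nat.sub_self] at h1
            rw [h1]; exact fun h => hveq h
          have hc : (insert (v 0) (insert (v (k+2)) A)).card = A.card + 2 := by
            rw [Finset.card_insert_of_notMem (by
                simp only [Finset.mem_insert]; push_neg; exact ⟨hveq, h0⟩),
              Finset.card_insert_of_notMem hm0]
          have hf : ((insert (v 0) (insert (v (k+2)) A)).filter (fun x => σS x = x))
              = A.filter (fun x => σS x = x) := by
            rw [Finset.filter_insert, if_neg hv0nfix, Finset.filter_insert, if_neg hvmnfix]
          rw [hc, hf]
          omega

end Aux

section Aux2
open List
variable {α : Type*} [DecidableEq α]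
set_option linter.unusedSectionVars false

lemma mem_factorFinset {u W : List α} : u ∈ factorFinset W ↔ u <:+: W := by
  simp only [factorFinset, List.mem_toFinset, List.mem_flatMap, List.mem_inits, List.mem_tails]
  constructor
  · rintro ⟨t, ht, hu⟩
    exact hu.isInfix.trans ht.isInfix
  · rintro ⟨s, t, rfl⟩
    exact ⟨s ++ u, ⟨t, by simp⟩, ⟨s, rfl⟩⟩

lemma factor_filter_eq (W : List α) (n : ℕ) (hn : n ≤ W.length) :
    (factorFinset W).filter (fun u => u.length = n)
      = (Finset.range (W.length - n + 1)).image (fun i => (W.drop i).take n) := by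
  ext u
  simp only [Finset.mem_filter, Finset.mem_image, Finset.mem_range, mem_factorFinset]
  constructor
  · rintro ⟨⟨s, t, rfl⟩, hlen⟩
    refine ⟨s.length, by simp; omega, ?_⟩
    rw [List.append_assoc, List.drop_left, List.take_left' hlen]
  · rintro ⟨i, hi, rfl⟩
    constructor
    · exact ⟨W.take i, (W.drop i).drop n,
        by rw [List.append_assoc, List.take_append_drop, List.take_append_drop]⟩
    · rw [List.length_take, List.length_drop]; omega

lemma pal_filter_eq (W : List α) (n : ℕ) (hn : n ≤ W.length) :
    (palFactorFinset W).filter (fun u => u.length = n)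
      = ((Finset.range (W.length - n + 1)).image (fun i => (W.drop i).take n)).filter
          (fun u => u.reverse = u) := by
  rw [palFactorFinset, Finset.filter_comm, factor_filter_eq W n hn]
  rfl

lemma factor_len_le {u W : List α} (h : u ∈ factorFinset W) : u.length ≤ W.length :=
  (mem_factorFinset.mp h).length_le

lemma C_zero_of_gt (W : List α) {n : ℕ} (hn : W.length < n) : C W n = 0 := by
  rw [C, Finset.card_eq_zero, Finset.filter_eq_empty_iff]
  intro u hu hlen
  have := factor_len_le hu
  omega

lemma P_le_C (W : List α) (n : ℕ) : P W n ≤ C W n := by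
  apply Finset.card_le_card
  intro u hu
  simp only [Finset.mem_filter, palFactorFinset] at hu ⊢
  exact ⟨hu.1.1, hu.2⟩

lemma C_zero' (W : List α) : C W 0 = 1 := by
  rw [C]
  have : (factorFinset W).filter (fun u => u.length = 0) = {([] : List α)} := by
    ext u
    simp only [Finset.mem_filter, Finset.mem_singleton, List.length_eq_zero_iff]
    constructor
    · exact fun h => h.2
    · rintro rfl; exact ⟨mem_factorFinset.mpr List.nil_infix, rfl⟩
  rw [this, Finset.card_singleton]

lemma P_zero' (W : List α) : P W 0 = 1 := by
  rw [P]
  have : (palFactorFinset W).filter (fun u => u.length = 0) = {([] : List α)} := by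
    ext u
    simp only [Finset.mem_filter, Finset.mem_singleton, List.length_eq_zero_iff, palFactorFinset]
    constructor
    · exact fun h => h.2
    · rintro rfl
      exact ⟨⟨mem_factorFinset.mpr List.nil_infix, by simp [Pal]⟩, rfl⟩
  rw [this, Finset.card_singleton]

lemma factor_full {u W : List α} (h : u ∈ factorFinset W) (hlen : u.length = W.length) :
    u = W :=
  (mem_factorFinset.mp h).sublist.eq_of_length hlen

lemma C_top (W : List α) : C W W.length = 1 := by
  rw [C]
  have : (factorFinset W).filter (fun u => u.length = W.length) = ({W} : Finset (List α)) := by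
    ext u
    simp only [Finset.mem_filter, Finset.mem_singleton]
    constructor
    · exact fun h => factor_full h.1 h.2
    · rintro rfl; exact ⟨mem_factorFinset.mpr (List.infix_refl _), rfl⟩
  rw [this, Finset.card_singleton]

lemma P_top_of_pal {W : List α} (h : Pal W) : P W W.length = 1 := by
  rw [P]
  have : (palFactorFinset W).filter (fun u => u.length = W.length) = ({W} : Finset (List α)) := by
    ext u
    simp only [Finset.mem_filter, Finset.mem_singleton, palFactorFinset]
    constructor
    · exact fun hu => factor_full hu.1.1 hu.2
    · rintro rfl; exact ⟨⟨mem_factorFinset.mpr (List.infix_refl _), h⟩, rfl⟩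
  rw [this, Finset.card_singleton]

lemma pal_of_P_top {W : List α} (h : 1 ≤ P W W.length) : Pal W := by
  rw [P, Finset.one_le_card] at h
  obtain ⟨u, hu⟩ := h.exists_mem
  simp only [Finset.mem_filter, palFactorFinset] at hu
  have := factor_full hu.1.1 hu.2
  subst this
  exact hu.1.2

lemma pal_take_drop {W : List α} (hrev : W.reverse = W) {i k : ℕ} (h : i + k ≤ W.length) :
    ((W.drop i).take k).reverse = (W.drop (W.length - k - i)).take k := by
  rw [List.reverse_take, List.length_drop, List.reverse_drop, hrev, List.drop_take]
  have h1 : W.length - i - k = W.length - k - i := by omega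
  rw [h1]
  congr 1
  omega

-- fiberwise sums
lemma card_factor_sum (W : List α) (M : ℕ) (hM : W.length < M) :
    (factorFinset W).card = ∑ n ∈ Finset.range M, C W n := by
  rw [Finset.card_eq_sum_card_fiberwise (f := fun u => u.length) (t := Finset.range M)]
  · rfl
  · intro u hu
    simp only [Finset.mem_coe, Finset.mem_range] at hu ⊢
    have := factor_len_le hu
    omega

lemma card_pal_sum (W : List α) (M : ℕ) (hM : W.length < M) :
    (palFactorFinset W).card = ∑ n ∈ Finset.range M, P W n := by
  rw [Finset.card_eq_sum_card_fiberwise (f := fun u => u.length) (t := Finset.range M)]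
  · rfl
  · intro u hu
    simp only [Finset.mem_coe, Finset.mem_range, palFactorFinset, Finset.mem_filter] at hu ⊢
    have := factor_len_le hu.1
    omega


lemma key_ineq {W : List α} (hrev : W.reverse = W) {n : ℕ} (hn : n < W.length) :
    P W n + P W (n+1) + C W n ≤ C W (n+1) + 2 := by
  set N := W.length with hNdef
  set m := N - n with hmdef
  set v : ℕ → List α := fun i => (W.drop i).take n with hvdef
  set e : ℕ → List α := fun i => (W.drop i).take (n+1) with hedef
  have hr1 : N - n + 1 = m + 1 := rfl
  have hr2 : N - (n+1) + 1 = m := by omega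
  have hC : C W n = ((Finset.range (m+1)).image v).card := by
    rw [C, factor_filter_eq W n hn.le, hr1]
  have hC1 : C W (n+1) = ((Finset.range m).image e).card := by
    rw [C, factor_filter_eq W (n+1) hn, hr2]
  have hP : P W n = (((Finset.range (m+1)).image v).filter (fun u => u.reverse = u)).card := by
    rw [P, pal_filter_eq W n hn.le, hr1]
  have hP1 : P W (n+1)
      = (((Finset.range m).image e).filter (fun u => u.reverse = u)).card := by
    rw [P, pal_filter_eq W (n+1) hn, hr2]
  rw [hC, hC1, hP, hP1]
  apply walk_lemma (List.reverse) (List.reverse) m v e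
  · intro i j hi hj hee
    have h1 : ∀ i, v i = (e i).take n := by
      intro i
      simp only [hvdef, hedef, List.take_take]
      congr 1
      exact (inf_of_le_left (Nat.le_succ n)).symm
    have h2 : ∀ i, v (i+1) = (e i).drop 1 := by
      intro i
      simp only [hvdef, hedef, List.drop_take, List.drop_drop]
      simp
    constructor
    · rw [h1, h1, hee]
    · rw [h2, h2, hee]
  · intro i hi
    have h : i + n ≤ N := by omega
    have h3 := pal_take_drop hrev h
    simp only [hvdef]
    rw [h3]
  · intro i hi
    have h : i + (n+1) ≤ N := by omega
    have h3 := pal_take_drop hrev h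
    simp only [hedef]
    rw [h3]
    congr 2 <;> omega

end Aux2

theorem stmt8 {α : Type*} [DecidableEq α] (W : List α) :
    (Rich W ∧ Pal W) ↔
      ∀ n : ℕ, n ≤ W.length →
        (P W n + P W (n + 1) : ℤ) = (C W (n + 1) : ℤ) - C W n + 2 := by
  set N := W.length with hNdef
  have hCtop : C W N = 1 := C_top W
  have hC1 : C W (N+1) = 0 := C_zero_of_gt W (by omega)
  have hP1 : P W (N+1) = 0 := by
    have := P_le_C W (N+1)
    omega
  have hC0 : C W 0 = 1 := C_zero' W
  have hP0 : P W 0 = 1 := P_zero' W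
  have hCsub : ∑ n ∈ Finset.range (N+1), ((C W (n+1) : ℤ) - C W n)
      = (C W (N+1) : ℤ) - C W 0 := Finset.sum_range_sub (fun n => (C W n : ℤ)) (N+1)
  have hPsumTot : ((palFactorFinset W).card : ℤ) = ∑ n ∈ Finset.range (N+2), (P W n : ℤ) := by
    rw [card_pal_sum W (N+2) (by omega)]
    push_cast
    rfl
  have hPsum1 : ∑ n ∈ Finset.range (N+1), (P W n : ℤ)
      = ((palFactorFinset W).card : ℤ) - P W (N+1) := by
    rw [hPsumTot, Finset.sum_range_succ (fun n => (P W n : ℤ)) (N+1)]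
    ring
  have hPsum2 : ∑ n ∈ Finset.range (N+1), (P W (n+1) : ℤ)
      = ((palFactorFinset W).card : ℤ) - P W 0 := by
    rw [hPsumTot, Finset.sum_range_succ' (fun n => (P W n : ℤ)) (N+1)]
    ring
  constructor
  · rintro ⟨hrich, hpal⟩
    have hPtop : P W N = 1 := P_top_of_pal hpal
    have hineq : ∀ n ∈ Finset.range (N+1),
        (0:ℤ) ≤ (C W (n+1) : ℤ) - C W n + 2 - P W n - P W (n+1) := by
      intro n hn
      simp only [Finset.mem_range] at hn
      rcases Nat.lt_or_ge n N with h | h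
      · have := key_ineq hpal h
        push_cast
        omega
      · have hnN : n = N := by omega
        subst hnN
        rw [hC1, hCtop, hPtop, hP1]
        norm_num
    have hpc : ((palFactorFinset W).card : ℤ) = (N : ℤ) + 1 := by
      rw [Rich] at hrich
      rw [hrich]
      push_cast
      ring
    have hsum : ∑ n ∈ Finset.range (N+1),
        ((C W (n+1) : ℤ) - C W n + 2 - P W n - P W (n+1)) = 0 := by
      have hexp : ∑ n ∈ Finset.range (N+1),
          ((C W (n+1) : ℤ) - C W n + 2 - P W n - P W (n+1))
          = (∑ n ∈ Finset.range (N+1), ((C W (n+1) : ℤ) - C W n))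
            + 2 * ((N:ℤ)+1)
            - (∑ n ∈ Finset.range (N+1), (P W n : ℤ))
            - (∑ n ∈ Finset.range (N+1), (P W (n+1) : ℤ)) := by
        simp only [Finset.sum_sub_distrib, Finset.sum_add_distrib, Finset.sum_const,
          Finset.card_range, nsmul_eq_mul]
        push_cast
        ring
      rw [hexp, hCsub, hPsum1, hPsum2, hpc, hC1, hC0, hP1, hP0]
      push_cast
      ring
    intro n hn
    have := (Finset.sum_eq_zero_iff_of_nonneg hineq).mp hsum n
      (Finset.mem_range.mpr (by omega))
    linarith
  · intro h
    have hN := h N le_rfl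
    rw [hC1, hCtop, hP1] at hN
    have hPN : P W N = 1 := by
      push_cast at hN
      omega
    have hpal : Pal W := pal_of_P_top (le_of_eq hPN.symm)
    refine ⟨?_, hpal⟩
    have hsum : ∑ n ∈ Finset.range (N+1), ((P W n : ℤ) + P W (n+1))
        = ∑ n ∈ Finset.range (N+1), ((C W (n+1) : ℤ) - C W n + 2) := by
      apply Finset.sum_congr rfl
      intro n hn
      exact h n (by simp only [Finset.mem_range] at hn; omega)
    rw [Finset.sum_add_distrib, hPsum1, hPsum2] at hsum
    have hrhs : ∑ n ∈ Finset.range (N+1), ((C W (n+1) : ℤ) - C W n + 2)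
        = (∑ n ∈ Finset.range (N+1), ((C W (n+1) : ℤ) - C W n)) + 2 * ((N:ℤ)+1) := by
      simp only [Finset.sum_add_distrib, Finset.sum_const, Finset.card_range, nsmul_eq_mul]
      push_cast
      ring
    rw [hrhs, hCsub, hC1, hC0, hP1, hP0] at hsum
    rw [Rich]
    have hgoal : ((palFactorFinset W).card : ℤ) = (N : ℤ) + 1 := by
      push_cast at hsum
      linarith
    exact_mod_cast hgoal
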